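/- Let T > 0, M > 0, let u : [0,T) × ℝ → ℝ be continuously differentiable with ∂ₓu(t,x) ≥ −M for all (t,x) ∈ [0,T) × ℝ, and let ρ : [0,T) × ℝ → ℝ be continuously differentiable and satisfy ∂ₜρ + u ∂ₓρ + 2 (∂ₓu) ρ = 0 on [0,T) × ℝ. Let q : [0,T) × ℝ → ℝ be continuously differentiable with ∂ₜq(t,x) = u(t, q(t,x)), q(0,x) = x, and suppose that for each t ∈ [0,T) the map q(t,·) : ℝ → ℝ is surjective. Then for every t ∈ [0,T), sup_{x ∈ ℝ} |ρ(t,x)| ≤ e^{2Mt} · sup_{x ∈ ℝ} |ρ(0,x)|. -/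

import Mathlib

open MeasureTheory Real ENNReal


lemma hasDerivAt_curry_fst (F : ℝ → ℝ → ℝ) (h : ContDiff ℝ 1 (Function.uncurry F)) (t x : ℝ) :
    HasDerivAt (fun s => F s x) (fderiv ℝ (Function.uncurry F) (t, x) (1, 0)) t :=
  ((h.differentiable one_ne_zero).differentiableAt.hasFDerivAt).comp_hasDerivAt t
    ((hasDerivAt_id t).prodMk (hasDerivAt_const t x))

lemma hasDerivAt_curry_snd (F : ℝ → ℝ → ℝ) (h : ContDiff ℝ 1 (Function.uncurry F)) (t x : ℝ) :
    HasDerivAt (F t) (fderiv ℝ (Function.uncurry F) (t, x) (0, 1)) x :=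
  ((h.differentiable one_ne_zero).differentiableAt.hasFDerivAt).comp_hasDerivAt x
    ((hasDerivAt_const x t).prodMk (hasDerivAt_id x))

lemma fderiv_pair (L : ℝ × ℝ →L[ℝ] ℝ) (v : ℝ) :
    L (1, v) = L (1, 0) + v * L (0, 1) := by
  have : ((1 : ℝ), v) = (1, 0) + v • ((0 : ℝ), (1 : ℝ)) := by
    simp [Prod.ext_iff]
  rw [this, map_add, _root_.map_smul]
  simp

/-- The `L^∞` a priori estimate for `ρ`: if `∂ₓu ≥ −M` on `[0,T) × ℝ`, `ρ`
solves `∂ₜρ + u ∂ₓρ + 2 (∂ₓu) ρ = 0`, and `q` is the flow of `u` with `q(t,·)`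
surjective for each `t`, then `sup_x |ρ(t,x)| ≤ e^{2Mt} sup_x |ρ(0,x)|`. -/
theorem stmt_11 (T M : ℝ) (hT : 0 < T) (hM : 0 < M)
    (u ρ q : ℝ → ℝ → ℝ)
    (hu : ContDiff ℝ 1 (Function.uncurry u))
    (hux : ∀ t ∈ Set.Ico (0 : ℝ) T, ∀ x : ℝ, deriv (u t) x ≥ -M)
    (hρ : ContDiff ℝ 1 (Function.uncurry ρ))
    (htransport : ∀ t ∈ Set.Ico (0 : ℝ) T, ∀ x : ℝ,
      deriv (fun s => ρ s x) t + u t x * deriv (ρ t) x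
        + 2 * deriv (u t) x * ρ t x = 0)
    (hq : ContDiff ℝ 1 (Function.uncurry q))
    (hode : ∀ t ∈ Set.Ico (0 : ℝ) T, ∀ x : ℝ,
      deriv (fun s => q s x) t = u t (q t x))
    (hq0 : ∀ x : ℝ, q 0 x = x)
    (hsurj : ∀ t ∈ Set.Ico (0 : ℝ) T, Function.Surjective (q t)) :
    ∀ t ∈ Set.Ico (0 : ℝ) T,
      (⨆ x : ℝ, (‖ρ t x‖₊ : ℝ≥0∞))
        ≤ ENNReal.ofReal (Real.exp (2 * M * t)) * ⨆ x : ℝ, (‖ρ 0 x‖₊ : ℝ≥0∞) := by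
  intro t ht
  obtain ⟨ht0, htT⟩ := ht
  -- pointwise real bound
  have key : ∀ x : ℝ, ∃ y : ℝ, |ρ t x| ≤ Real.exp (2 * M * t) * |ρ 0 y| := by
    intro x
    obtain ⟨y, hy⟩ := hsurj t ⟨ht0, htT⟩ x
    refine ⟨y, ?_⟩
    -- characteristic curve
    set α : ℝ → ℝ := fun s => fderiv ℝ (Function.uncurry u) (s, q s y) (0, 1) with hαdef
    have hqycont : Continuous (fun s => q s y) :=
      hq.continuous.comp (continuous_id.prodMk continuous_const)
    have hcurve : Continuous (fun s => ((s, q s y) : ℝ × ℝ)) :=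
      continuous_id.prodMk hqycont
    have hαcont : Continuous α :=
      (((hu.continuous_fderiv one_ne_zero).comp hcurve).clm_apply continuous_const)
    have hα_eq : ∀ s, α s = deriv (u s) (q s y) := fun s =>
      ((hasDerivAt_curry_snd u hu s (q s y)).deriv).symm
    set A : ℝ → ℝ := fun s => ∫ τ in (0:ℝ)..s, α τ with hAdef
    have hA : ∀ s : ℝ, HasDerivAt A (α s) s := by
      intro s
      exact intervalIntegral.integral_hasDerivAt_right
        (hαcont.intervalIntegrable _ _)
        hαcont.aestronglyMeasurable.stronglyMeasurableAtFilter
        hαcont.continuousAt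
    set f : ℝ → ℝ := fun s => ρ s (q s y) with hfdef
    have hf : ∀ s ∈ Set.Ico (0:ℝ) T, HasDerivAt f (-(2 * α s * f s)) s := by
      intro s hs
      have hqd := hasDerivAt_curry_fst q hq s y
      have e : fderiv ℝ (Function.uncurry q) (s, y) (1, 0) = u s (q s y) := by
        rw [← hqd.deriv]; exact hode s hs y
      rw [e] at hqd
      have hcomp : HasDerivAt f
          (fderiv ℝ (Function.uncurry ρ) (s, q s y) (1, u s (q s y))) s :=
        ((hρ.differentiable one_ne_zero).differentiableAt.hasFDerivAt).comp_hasDerivAt s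
          ((hasDerivAt_id s).prodMk hqd)
      have e2 : fderiv ℝ (Function.uncurry ρ) (s, q s y) (1, u s (q s y))
          = -(2 * α s * f s) := by
        rw [fderiv_pair]
        have e3 : fderiv ℝ (Function.uncurry ρ) (s, q s y) (1, 0)
            = deriv (fun s' => ρ s' (q s y)) s :=
          ((hasDerivAt_curry_fst ρ hρ s (q s y)).deriv).symm
        have e4 : fderiv ℝ (Function.uncurry ρ) (s, q s y) (0, 1)
            = deriv (ρ s) (q s y) :=
          ((hasDerivAt_curry_snd ρ hρ s (q s y)).deriv).symm
        have e5 := htransport s hs (q s y)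
        rw [e3, e4, hα_eq]
        simp only [hfdef]
        linarith
      rwa [e2] at hcomp
    have hfcont : Continuous f := hρ.continuous.comp hcurve
    have hAcont : Continuous A :=
      continuous_iff_continuousAt.2 fun s => (hA s).continuousAt
    set h : ℝ → ℝ := fun s => f s * Real.exp (2 * A s) with hhdef
    have hh' : ∀ s ∈ Set.Ico (0:ℝ) t, HasDerivAt h 0 s := by
      intro s hs
      have hsT : s ∈ Set.Ico (0:ℝ) T := ⟨hs.1, lt_trans hs.2 htT⟩
      have := (hf s hsT).mul (((hA s).const_mul 2).exp)
      exact HasDerivAt.congr_deriv this (by ring)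
    have hconst : h t = h 0 := by
      have := constant_of_has_deriv_right_zero
        (f := h) (a := 0) (b := t) (hfcont.mul (continuous_const.mul hAcont).rexp).continuousOn
        (fun s hs => (hh' s hs).hasDerivWithinAt)
      exact this t ⟨ht0, le_rfl⟩
    have hA0 : A 0 = 0 := intervalIntegral.integral_same
    have hf0 : f 0 = ρ 0 y := by simp [hfdef, hq0]
    have hft : f t = ρ t x := by rw [hfdef]; simp [hy]
    have heq : ρ t x * Real.exp (2 * A t) = ρ 0 y := by
      have := hconst
      rw [hhdef] at this
      simpa [hA0, hf0, hft] using this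
    -- lower bound on A t
    have hAt : -(M * t) ≤ A t := by
      have hmono : ∫ τ in (0:ℝ)..t, (-M : ℝ) ≤ ∫ τ in (0:ℝ)..t, α τ := by
        apply intervalIntegral.integral_mono_on ht0
          (intervalIntegrable_const) (hαcont.intervalIntegrable _ _)
        intro τ hτ
        rw [hα_eq]
        exact hux τ ⟨hτ.1, lt_of_le_of_lt hτ.2 htT⟩ (q τ y)
      rw [intervalIntegral.integral_const, smul_eq_mul] at hmono
      calc -(M * t) = (t - 0) * (-M) := by ring
        _ ≤ A t := hmono
    have hexp : Real.exp (-(2 * A t)) ≤ Real.exp (2 * M * t) := by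
      apply Real.exp_le_exp.2
      nlinarith
    have hρtx : ρ t x = ρ 0 y * Real.exp (-(2 * A t)) := by
      rw [← heq, Real.exp_neg]
      field_simp
    rw [hρtx, abs_mul, abs_of_pos (Real.exp_pos _), mul_comm (Real.exp _)]
    exact mul_le_mul_of_nonneg_left hexp (abs_nonneg _)
  -- conclude in ℝ≥0∞
  apply iSup_le
  intro x
  obtain ⟨y, hxy⟩ := key x
  calc (‖ρ t x‖₊ : ℝ≥0∞) = ENNReal.ofReal ‖ρ t x‖ := (ENNReal.ofReal_eq_coe_nnreal (norm_nonneg _)).symm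
    _ ≤ ENNReal.ofReal (Real.exp (2 * M * t) * ‖ρ 0 y‖) := by
        apply ENNReal.ofReal_le_ofReal
        simpa [Real.norm_eq_abs] using hxy
    _ = ENNReal.ofReal (Real.exp (2 * M * t)) * ENNReal.ofReal ‖ρ 0 y‖ :=
        ENNReal.ofReal_mul (Real.exp_pos _).le
    _ = ENNReal.ofReal (Real.exp (2 * M * t)) * (‖ρ 0 y‖₊ : ℝ≥0∞) := by
        exact congrArg _ (ENNReal.ofReal_eq_coe_nnreal (norm_nonneg _))
    _ ≤ _ := mul_le_mul_right (le_iSup (fun x : ℝ => (‖ρ 0 x‖₊ : ℝ≥0∞)) y) _
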